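/- Let f : [a,b] → ℝ be such that f' is absolutely continuous on [a,b] and f'' ∈ L^∞([a,b]). Then for all x ∈ [a, (a+b)/2]: |∫_a^b f(t) dt - (1/4)[f(a)+f(x)+f(a+b-x)+f(b)](b-a) + ((b-a)/4)(x-(a+b)/2)(f'(x)-f'(a+b-x))| ≤ (1/3)[((a+3b)/4 - x)(x-a)² + ((a+b)/2 - x)³]·‖f''‖_∞. -/

import Mathlib

set_option maxHeartbeats 1000000

open MeasureTheory Set

private lemma parts_aux (f f' f'' : ℝ → ℝ) (p q A B : ℝ) (hpq : p ≤ q)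
    (hf' : ∀ t ∈ Icc p q, HasDerivAt f (f' t) t)
    (hf'' : ∀ t ∈ Icc p q, HasDerivAt f' (f'' t) t)
    (hint : IntervalIntegrable f'' volume p q) :
    ∫ t in p..q, (t-A)*(t-B)/2 * f'' t
      = ((q-A)*(q-B)/2 * f' q - (q - (A+B)/2) * f q)
      - ((p-A)*(p-B)/2 * f' p - (p - (A+B)/2) * f p)
      + ∫ t in p..q, f t := by
  have huIcc : uIcc p q = Icc p q := uIcc_of_le hpq
  have hu : ∀ t ∈ uIcc p q, HasDerivAt (fun s => (s-A)*(s-B)/2) (t - (A+B)/2) t := by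
    intro t _
    have h : HasDerivAt (fun s : ℝ => (s-A)*(s-B)/2) ((1 * (t - B) + (t - A) * 1) / 2) t := (((hasDerivAt_id t).sub_const A).fun_mul ((hasDerivAt_id t).sub_const B)).div_const 2
    convert h using 1
    ring
  have hl : ∀ t ∈ uIcc p q, HasDerivAt (fun s => s - (A+B)/2) 1 t := by
    intro t _; exact (hasDerivAt_id t).sub_const _
  have hf'c : ContinuousOn f' (uIcc p q) := by
    rw [huIcc]; exact fun t ht => (hf'' t ht).continuousAt.continuousWithinAt
  have hfd : ∀ t ∈ uIcc p q, HasDerivAt f (f' t) t := by rw [huIcc]; exact hf'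
  have hf'd : ∀ t ∈ uIcc p q, HasDerivAt f' (f'' t) t := by rw [huIcc]; exact hf''
  have hconst : IntervalIntegrable (fun t : ℝ => t - (A+B)/2) volume p q :=
    (continuousOn_id.sub continuousOn_const).intervalIntegrable
  have h1 := intervalIntegral.integral_mul_deriv_eq_deriv_mul hu hf'd hconst hint
  have h2 := intervalIntegral.integral_mul_deriv_eq_deriv_mul hl hfd
    (intervalIntegrable_const) (hf'c.intervalIntegrable)
  simp only [one_mul] at h2
  rw [h1, h2]
  ring

private lemma bound_aux (g f'' : ℝ → ℝ) (M p q : ℝ) (hpq : p ≤ q)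
    (hg : ContinuousOn g (uIcc p q))
    (hint : IntervalIntegrable f'' volume p q)
    (hM : ∀ᵐ t ∂volume, t ∈ Icc p q → |f'' t| ≤ M) :
    |∫ t in p..q, g t * f'' t| ≤ ∫ t in p..q, |g t| * M := by
  have hgi : IntervalIntegrable (fun t => g t * f'' t) volume p q :=
    hint.continuousOn_mul hg
  have h1 : |∫ t in p..q, g t * f'' t| ≤ ∫ t in p..q, |g t * f'' t| :=
    intervalIntegral.abs_integral_le_integral_abs hpq
  have h2 : (∫ t in p..q, |g t * f'' t|) ≤ ∫ t in p..q, |g t| * M := by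
    apply intervalIntegral.integral_mono_ae_restrict hpq hgi.abs
      ((hg.abs.mul continuousOn_const).intervalIntegrable)
    have hM' : ∀ᵐ t ∂(volume.restrict (Icc p q)), t ∈ Icc p q → |f'' t| ≤ M :=
      ae_restrict_of_ae hM
    filter_upwards [hM', ae_restrict_mem measurableSet_Icc] with t ht htmem
    rw [abs_mul]
    exact mul_le_mul_of_nonneg_left (ht htmem) (abs_nonneg _)
  linarith

theorem companion_ostrowski_like_rearranged
    (a b : ℝ) (hab : a < b) (f f' f'' : ℝ → ℝ) (M : ℝ)
    (hf' : ∀ t ∈ Icc a b, HasDerivAt f (f' t) t)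
    (hf'' : ∀ t ∈ Icc a b, HasDerivAt f' (f'' t) t)
    (hint : IntervalIntegrable f'' volume a b)
    (hM : ∀ᵐ t ∂volume, t ∈ Icc a b → |f'' t| ≤ M)
    (x : ℝ) (hx : x ∈ Icc a ((a + b)/2)) :
    |(∫ t in a..b, f t) - (1/4) * (f a + f x + f (a + b - x) + f b) * (b - a)
      + ((b - a)/4) * (x - (a + b)/2) * (f' x - f' (a + b - x))|
    ≤ (1/3) * (((a + 3*b)/4 - x) * (x - a)^2 + ((a + b)/2 - x)^3) * M := by
  obtain ⟨hax, hxm⟩ := hx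
  have hmy : (a + b)/2 ≤ a + b - x := by linarith
  have hyb : a + b - x ≤ b := by linarith
  have hxy : x ≤ a + b - x := by linarith
  have hab' : a ≤ b := le_of_lt hab
  have hxb : x ≤ b := by linarith
  have hay : a ≤ a + b - x := by linarith
  have hs1 : Icc a x ⊆ Icc a b := Icc_subset_Icc le_rfl hxb
  have hs2 : Icc x (a + b - x) ⊆ Icc a b := Icc_subset_Icc hax hyb
  have hs3 : Icc (a + b - x) b ⊆ Icc a b := Icc_subset_Icc hay le_rfl
  have hint1 : IntervalIntegrable f'' volume a x :=
    hint.mono_set (by rw [uIcc_of_le hab', uIcc_of_le hax]; exact hs1)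
  have hint2 : IntervalIntegrable f'' volume x (a + b - x) :=
    hint.mono_set (by rw [uIcc_of_le hab', uIcc_of_le hxy]; exact hs2)
  have hint3 : IntervalIntegrable f'' volume (a + b - x) b :=
    hint.mono_set (by rw [uIcc_of_le hab', uIcc_of_le hyb]; exact hs3)
  -- M ≥ 0
  have hM0 : 0 ≤ M := by
    by_contra h
    push_neg at h
    have hae : ∀ᵐ t ∂(volume : Measure ℝ), t ∉ Icc a b := by
      filter_upwards [hM] with t ht
      intro hmem
      have h1 := ht hmem
      have h2 := abs_nonneg (f'' t)
      linarith
    rw [ae_iff] at hae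
    simp only [not_not] at hae
    have hv : (volume : Measure ℝ) (Icc a b) = 0 := hae
    rw [Real.volume_Icc] at hv
    rw [ENNReal.ofReal_eq_zero] at hv
    linarith
  -- f integrable
  have hfc : ContinuousOn f (Icc a b) := fun t ht => (hf' t ht).continuousAt.continuousWithinAt
  have hfint : ∀ p q, Icc p q ⊆ Icc a b → p ≤ q → IntervalIntegrable f volume p q := by
    intro p q hsub hpq
    exact (hfc.mono hsub).intervalIntegrable_of_Icc hpq
  have hsplit : (∫ t in a..x, f t) + (∫ t in x..(a + b - x), f t) + (∫ t in (a + b - x)..b, f t)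
      = ∫ t in a..b, f t := by
    rw [intervalIntegral.integral_add_adjacent_intervals (hfint a x hs1 hax)
      (hfint x (a + b - x) hs2 hxy),
      intervalIntegral.integral_add_adjacent_intervals
        (hfint a (a + b - x) (Icc_subset_Icc le_rfl hyb) hay) (hfint (a + b - x) b hs3 hyb)]
  -- three integration-by-parts identities
  have hP1 := parts_aux f f' f'' a x a ((a + b)/2) hax (fun t ht => hf' t (hs1 ht))
    (fun t ht => hf'' t (hs1 ht)) hint1
  have hP2 := parts_aux f f' f'' x (a + b - x) ((a + b)/2) ((a + b)/2) hxy
    (fun t ht => hf' t (hs2 ht)) (fun t ht => hf'' t (hs2 ht)) hint2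
  have hP3 := parts_aux f f' f'' (a + b - x) b b ((a + b)/2) hyb
    (fun t ht => hf' t (hs3 ht)) (fun t ht => hf'' t (hs3 ht)) hint3
  -- main identity
  have hiden : (∫ t in a..b, f t) - (1/4) * (f a + f x + f (a + b - x) + f b) * (b - a)
      + ((b - a)/4) * (x - (a + b)/2) * (f' x - f' (a + b - x))
      = (∫ t in a..x, (t-a)*(t-(a + b)/2)/2 * f'' t)
      + (∫ t in x..(a + b - x), (t-(a + b)/2)*(t-(a + b)/2)/2 * f'' t)
      + (∫ t in (a + b - x)..b, (t-b)*(t-(a + b)/2)/2 * f'' t) := by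
    linear_combination -hP1 - hP2 - hP3 - hsplit
  rw [hiden]
  -- bounds on each piece
  have hcq : ∀ c : ℝ, Continuous (fun t : ℝ => (t-c)*(t-(a + b)/2)/2) := by
    intro c
    exact ((continuous_id.sub continuous_const).mul (continuous_id.sub continuous_const)).div_const 2
  have hB1 : |∫ t in a..x, (t-a)*(t-(a + b)/2)/2 * f'' t|
      ≤ ∫ t in a..x, |(t-a)*(t-(a + b)/2)/2| * M :=
    bound_aux (fun t => (t-a)*(t-(a + b)/2)/2) f'' M a x hax ((hcq a).continuousOn) hint1
      (by filter_upwards [hM] with t ht htmem; exact ht (hs1 htmem))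
  have hB2 : |∫ t in x..(a + b - x), (t-(a + b)/2)*(t-(a + b)/2)/2 * f'' t|
      ≤ ∫ t in x..(a + b - x), |(t-(a + b)/2)*(t-(a + b)/2)/2| * M :=
    bound_aux (fun t => (t-(a + b)/2)*(t-(a + b)/2)/2) f'' M x (a + b - x) hxy
      ((hcq ((a + b)/2)).continuousOn) hint2
      (by filter_upwards [hM] with t ht htmem; exact ht (hs2 htmem))
  have hB3 : |∫ t in (a + b - x)..b, (t-b)*(t-(a + b)/2)/2 * f'' t|
      ≤ ∫ t in (a + b - x)..b, |(t-b)*(t-(a + b)/2)/2| * M :=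
    bound_aux (fun t => (t-b)*(t-(a + b)/2)/2) f'' M (a + b - x) b hyb
      ((hcq b).continuousOn) hint3
      (by filter_upwards [hM] with t ht htmem; exact ht (hs3 htmem))
  -- evaluate the integrals of |kernel|
  have hE1 : (∫ t in a..x, |(t-a)*(t-(a + b)/2)/2| * M)
      = ((((a + b)/2+a)*x^2/2 - x^3/3 - a*((a + b)/2)*x)/2
        - (((a + b)/2+a)*a^2/2 - a^3/3 - a*((a + b)/2)*a)/2) * M := by
    have hcongr : ∀ t ∈ uIcc a x, |(t-a)*(t-(a + b)/2)/2| * M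
        = ((((a + b)/2+a)*t - t^2 - a*((a + b)/2))/2) * M := by
      intro t ht
      rw [uIcc_of_le hax] at ht
      obtain ⟨h1, h2⟩ := ht
      have h3 : t ≤ (a + b)/2 := le_trans h2 hxm
      rw [abs_of_nonpos (by nlinarith)]
      ring
    rw [intervalIntegral.integral_congr hcongr]
    have hd : ∀ t ∈ uIcc a x, HasDerivAt
        (fun s => ((((a + b)/2+a)*s^2/2 - s^3/3 - a*((a + b)/2)*s)/2) * M)
        (((((a + b)/2+a)*t - t^2 - a*((a + b)/2))/2) * M) t := by
      intro t _
      have h : HasDerivAt (fun s : ℝ => ((((a + b)/2+a)*s^2/2 - s^3/3 - a*((a + b)/2)*s)/2) * M)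
          (((((a + b)/2+a)*(↑2*t^1)/2 - (↑3*t^2)/3 - a*((a + b)/2)*1)/2) * M) t := by
        apply HasDerivAt.mul_const
        apply HasDerivAt.div_const
        exact (((hasDerivAt_pow 2 t).const_mul _).div_const 2 |>.sub
          ((hasDerivAt_pow 3 t).div_const 3)).sub ((hasDerivAt_id t).const_mul _)
      convert h using 1
      ring
    rw [intervalIntegral.integral_eq_sub_of_hasDerivAt hd
      (Continuous.intervalIntegrable (by exact
        ((((continuous_const.mul continuous_id).sub (continuous_pow 2)).sub
          continuous_const).div_const 2).mul continuous_const) a x)]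
    ring
  have hE2 : (∫ t in x..(a + b - x), |(t-(a + b)/2)*(t-(a + b)/2)/2| * M)
      = (((a + b - x)-(a + b)/2)^3/6 - (x-(a + b)/2)^3/6) * M := by
    have hcongr : ∀ t ∈ uIcc x (a + b - x), |(t-(a + b)/2)*(t-(a + b)/2)/2| * M
        = ((t-(a + b)/2)*(t-(a + b)/2)/2) * M := by
      intro t _
      rw [abs_of_nonneg (by nlinarith [sq_nonneg (t-(a + b)/2)])]
    rw [intervalIntegral.integral_congr hcongr]
    have hd : ∀ t ∈ uIcc x (a + b - x), HasDerivAt (fun s => ((s-(a + b)/2)^3/6) * M)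
        (((t-(a + b)/2)*(t-(a + b)/2)/2) * M) t := by
      intro t _
      have h : HasDerivAt (fun s : ℝ => ((s-(a + b)/2)^3/6) * M)
          (((↑3*(t-(a + b)/2)^2*1)/6) * M) t := by
        apply HasDerivAt.mul_const
        apply HasDerivAt.div_const
        exact HasDerivAt.fun_pow ((hasDerivAt_id t).sub_const _) 3
      convert h using 1
      ring
    rw [intervalIntegral.integral_eq_sub_of_hasDerivAt hd
      (Continuous.intervalIntegrable (by exact
        (((continuous_id.sub continuous_const).mul
          (continuous_id.sub continuous_const)).div_const 2).mul continuous_const)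
        x (a + b - x))]
    ring
  have hE3 : (∫ t in (a + b - x)..b, |(t-b)*(t-(a + b)/2)/2| * M)
      = (((((a + b)/2+b)*b^2/2 - b^3/3 - b*((a + b)/2)*b)/2)
        - ((((a + b)/2+b)*(a + b - x)^2/2 - (a + b - x)^3/3 - b*((a + b)/2)*(a + b - x))/2)) * M := by
    have hcongr : ∀ t ∈ uIcc (a + b - x) b, |(t-b)*(t-(a + b)/2)/2| * M
        = ((((a + b)/2+b)*t - t^2 - b*((a + b)/2))/2) * M := by
      intro t ht
      rw [uIcc_of_le hyb] at ht
      obtain ⟨h1, h2⟩ := ht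
      have h3 : (a + b)/2 ≤ t := le_trans hmy h1
      rw [abs_of_nonpos (by nlinarith)]
      ring
    rw [intervalIntegral.integral_congr hcongr]
    have hd : ∀ t ∈ uIcc (a + b - x) b, HasDerivAt
        (fun s => ((((a + b)/2+b)*s^2/2 - s^3/3 - b*((a + b)/2)*s)/2) * M)
        (((((a + b)/2+b)*t - t^2 - b*((a + b)/2))/2) * M) t := by
      intro t _
      have h : HasDerivAt (fun s : ℝ => ((((a + b)/2+b)*s^2/2 - s^3/3 - b*((a + b)/2)*s)/2) * M)
          (((((a + b)/2+b)*(↑2*t^1)/2 - (↑3*t^2)/3 - b*((a + b)/2)*1)/2) * M) t := by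
        apply HasDerivAt.mul_const
        apply HasDerivAt.div_const
        exact (((hasDerivAt_pow 2 t).const_mul _).div_const 2 |>.sub
          ((hasDerivAt_pow 3 t).div_const 3)).sub ((hasDerivAt_id t).const_mul _)
      convert h using 1
      ring
    rw [intervalIntegral.integral_eq_sub_of_hasDerivAt hd
      (Continuous.intervalIntegrable (by exact
        ((((continuous_const.mul continuous_id).sub (continuous_pow 2)).sub
          continuous_const).div_const 2).mul continuous_const) (a + b - x) b)]
    ring
  rw [hE1] at hB1; rw [hE2] at hB2; rw [hE3] at hB3
  set J1 := ∫ t in a..x, (t-a)*(t-(a + b)/2)/2 * f'' t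
  set J2 := ∫ t in x..(a + b - x), (t-(a + b)/2)*(t-(a + b)/2)/2 * f'' t
  set J3 := ∫ t in (a + b - x)..b, (t-b)*(t-(a + b)/2)/2 * f'' t
  have htri : |J1 + J2 + J3| ≤ |J1| + |J2| + |J3| := by
    calc |J1 + J2 + J3| ≤ |J1 + J2| + |J3| := abs_add_le _ _
    _ ≤ |J1| + |J2| + |J3| := by linarith [abs_add_le J1 J2]
  nlinarith [hB1, hB2, hB3, htri]
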